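/- Let f, h : ℝ^d → ℝ be differentiable on an open convex set D and let L > 0. Then Lh - f is convex on D if and only if for all x, y ∈ D, f(x) ≤ f(y) + ⟨∇f(y), x - y⟩ + L·D_h(x,y). -/

import Mathlib

open scoped RealInnerProductSpace

variable {d : ℕ}

local notation "E" => EuclideanSpace ℝ (Fin d)

lemma convexOn_iff_grad (D : Set (EuclideanSpace ℝ (Fin d)))
    (hDopen : IsOpen D) (hDconv : Convex ℝ D)
    (g : EuclideanSpace ℝ (Fin d) → ℝ)
    (hg : ∀ x ∈ D, DifferentiableAt ℝ g x) :
    ConvexOn ℝ D g ↔ ∀ x ∈ D, ∀ y ∈ D, g y + ⟪gradient g y, x - y⟫ ≤ g x := by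
  constructor
  · intro hc x hx y hy
    set ℓ : ℝ → EuclideanSpace ℝ (Fin d) := fun t => t • (x - y) + y with hℓdef
    have hℓeq : ∀ t : ℝ, (AffineMap.lineMap y x : ℝ →ᵃ[ℝ] EuclideanSpace ℝ (Fin d)) t = ℓ t := by
      intro t; simp [AffineMap.lineMap_apply_module', hℓdef]
    have hℓderiv : HasDerivAt ℓ (x - y) 0 := by
      simpa [hℓdef] using ((hasDerivAt_id (0:ℝ)).smul_const (x - y)).add_const y
    have hgy : HasFDerivAt g ((InnerProductSpace.toDual ℝ _) (gradient g y)) y :=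
      (hasGradientAt_iff_hasFDerivAt).1 (hg y hy).hasGradientAt
    have hφ : HasDerivAt (g ∘ ℓ) ⟪gradient g y, x - y⟫ 0 := by
      have h0 : ℓ 0 = y := by simp [hℓdef]
      have hgy' : HasFDerivAt g ((InnerProductSpace.toDual ℝ _) (gradient g y)) (ℓ 0) := by
        rw [h0]; exact hgy
      simpa only [InnerProductSpace.toDual_apply_apply] using hgy'.comp_hasDerivAt 0 hℓderiv
    have hsub : Set.Icc (0:ℝ) 1 ⊆ (AffineMap.lineMap y x : ℝ →ᵃ[ℝ] _) ⁻¹' D := by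
      intro t ht
      have : (1 - t) • y + t • x ∈ D :=
        hDconv hy hx (by linarith [ht.2]) ht.1 (by ring)
      simpa [Set.mem_preimage, AffineMap.lineMap_apply_module] using this
    have hc' : ConvexOn ℝ (Set.Icc (0:ℝ) 1) (g ∘ ℓ) := by
      have := (hc.comp_affineMap (AffineMap.lineMap y x)).subset hsub (convex_Icc 0 1)
      have heq : (g ∘ (AffineMap.lineMap y x : ℝ →ᵃ[ℝ] _)) = g ∘ ℓ := by
        funext t; simp [Function.comp, hℓeq t]
      rwa [heq] at this
    have hsl := hc'.le_slope_of_hasDerivAt (x := 0) (y := 1)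
      (Set.mem_Icc.2 ⟨le_refl 0, zero_le_one⟩) (Set.mem_Icc.2 ⟨zero_le_one, le_refl 1⟩)
      zero_lt_one hφ
    have h0 : (g ∘ ℓ) 0 = g y := by simp [hℓdef]
    have h1 : (g ∘ ℓ) 1 = g x := by simp [hℓdef, Function.comp]
    rw [slope_def_field, h1, h0, sub_zero, div_one] at hsl
    linarith
  · intro hineq
    refine ⟨hDconv, fun {x} hx {y} hy {a} {b} ha hb hab => ?_⟩
    set z := a • x + b • y with hz
    have hzD : z ∈ D := hDconv hx hy ha hb hab
    have h1 := hineq x hx z hzD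
    have h2 := hineq y hy z hzD
    have hzero : a • (x - z) + b • (y - z) = 0 := by
      have : a • (x - z) + b • (y - z) = a • x + b • y - (a + b) • z := by module
      rw [this, hab, one_smul, hz]; abel
    have hin : a * ⟪gradient g z, x - z⟫ + b * ⟪gradient g z, y - z⟫ = 0 := by
      rw [← real_inner_smul_right, ← real_inner_smul_right, ← inner_add_right, hzero,
        inner_zero_right]
    simp only [smul_eq_mul]
    have hzz : a * g z + b * g z = g z := by rw [← add_mul, hab, one_mul]
    linarith [mul_le_mul_of_nonneg_left h1 ha, mul_le_mul_of_nonneg_left h2 hb]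

/-- `L·h - f` is convex on an open convex set `D` iff `f` satisfies the
`L`-relative smoothness (descent/majorization) inequality w.r.t. `h` on `D`. -/
theorem relative_smoothness_iff (d : ℕ) (D : Set (EuclideanSpace ℝ (Fin d)))
    (hDopen : IsOpen D) (hDconv : Convex ℝ D)
    (f h : EuclideanSpace ℝ (Fin d) → ℝ)
    (hf : ∀ x ∈ D, DifferentiableAt ℝ f x)
    (hh : ∀ x ∈ D, DifferentiableAt ℝ h x)
    (L : ℝ) (hL : 0 < L) :
    ConvexOn ℝ D (fun x => L * h x - f x) ↔
      ∀ x ∈ D, ∀ y ∈ D,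
        f x ≤ f y + ⟪gradient f y, x - y⟫
          + L * (h x - h y - ⟪gradient h y, x - y⟫) := by
  set g : EuclideanSpace ℝ (Fin d) → ℝ := fun x => L * h x - f x with hgdef
  have hg : ∀ x ∈ D, DifferentiableAt ℝ g x := fun x hx =>
    ((hh x hx).const_mul L).sub (hf x hx)
  have hgrad : ∀ y ∈ D, gradient g y = L • gradient h y - gradient f y := by
    intro y hy
    have hfd : HasFDerivAt g
        ((InnerProductSpace.toDual ℝ _) (L • gradient h y - gradient f y)) y := by
      have h1 := (hasGradientAt_iff_hasFDerivAt).1 (hh y hy).hasGradientAt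
      have h2 := (hasGradientAt_iff_hasFDerivAt).1 (hf y hy).hasGradientAt
      have := (h1.const_smul L).sub h2
      have e : (L • h - f) = g := by funext x; simp [hgdef]
      rw [e] at this
      simpa [map_sub, map_smul] using this
    exact ((hasGradientAt_iff_hasFDerivAt).2 hfd).gradient
  rw [convexOn_iff_grad D hDopen hDconv g hg]
  constructor
  · intro H x hx y hy
    have := H x hx y hy
    rw [hgrad y hy, inner_sub_left, real_inner_smul_left] at this
    simp only [hgdef] at this
    linarith
  · intro H x hx y hy
    have := H x hx y hy
    rw [hgrad y hy, inner_sub_left, real_inner_smul_left]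
    simp only [hgdef]
    linarith
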